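/- Let n ≤ d, let A ∈ ℝ^{n×d} have rank n, let α* ∈ ℝ^d, W ∈ ℝ^n, and Y := A α* + W. Given any first-stage estimate α₁ ∈ ℝ^d, define the residual W' := Y − A α₁ and the hybrid interpolator α_hybrid := α₁ + Aᵀ (A Aᵀ)^{-1} W'. Then A α_hybrid = Y (so α_hybrid interpolates the data), and its excess test MSE for whitened features satisfies ‖α_hybrid − α*‖₂² ≤ 2 ‖α₁ − α*‖₂² + (4 ‖W‖₂² + 4 ‖A(α₁ − α*)‖₂²) / λ_min(A Aᵀ), where λ_min(A Aᵀ) > 0 is the smallest eigenvalue of A Aᵀ. (Equivalently, writing the estimation error E_est := ‖α₁ − α*‖₂² and prediction error E_pred := ‖A(α₁ − α*)‖₂²/n, the test MSE of the hybrid interpolator is at most 2 E_est + (4‖W‖₂² + 4 n E_pred)/λ_min(A Aᵀ).) -/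

import Mathlib

open Matrix

private lemma dotHelper {m k : ℕ} (B : Matrix (Fin m) (Fin k) ℝ) (x : Fin k → ℝ) (y : Fin m → ℝ) :
    (B *ᵥ x) ⬝ᵥ y = x ⬝ᵥ (Bᵀ *ᵥ y) := by
  rw [dotProduct_comm, dotProduct_mulVec, ← mulVec_transpose, dotProduct_comm]

private lemma auxPosDef {n d : ℕ} (A : Matrix (Fin n) (Fin d) ℝ) (hrank : A.rank = n) :
    (A * Aᵀ).PosDef := by
  have hinj : Function.Injective Aᵀ.mulVec := by
    have h1 : Aᵀ.rank = n := by rw [A.rank_transpose, hrank]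
    have h2 := LinearMap.finrank_range_add_finrank_ker (Aᵀ.mulVecLin)
    have h3 : Module.finrank ℝ (LinearMap.range Aᵀ.mulVecLin) = n := h1
    rw [h3, Module.finrank_fintype_fun_eq_card, Fintype.card_fin] at h2
    have h4 : Module.finrank ℝ (LinearMap.ker Aᵀ.mulVecLin) = 0 := by omega
    have h5 : LinearMap.ker Aᵀ.mulVecLin = ⊥ := Submodule.finrank_eq_zero.mp h4
    have := LinearMap.ker_eq_bot.mp h5
    rwa [Matrix.coe_mulVecLin] at this
  rw [posDef_iff_dotProduct_mulVec]
  constructor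
  · exact (by
      simpa [conjTranspose_eq_transpose_of_trivial] using isHermitian_mul_conjTranspose_self A)
  · intro x hx
    have hne : Aᵀ *ᵥ x ≠ 0 := by
      intro h
      exact hx (hinj (by simpa using h))
    have : (star x) ⬝ᵥ ((A * Aᵀ) *ᵥ x) = (Aᵀ *ᵥ x) ⬝ᵥ (Aᵀ *ᵥ x) := by
      rw [star_trivial, ← mulVec_mulVec, dotProduct_mulVec, ← mulVec_transpose]
    rw [this]
    have := dotProduct_star_self_pos_iff (v := Aᵀ *ᵥ x) |>.mpr hne
    simpa using this

private lemma quadBound {n : ℕ} (hn : 0 < n) (M : Matrix (Fin n) (Fin n) ℝ) (hM : M.PosDef)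
    (v : Fin n → ℝ) :
    (M⁻¹ *ᵥ v) ⬝ᵥ v ≤ (v ⬝ᵥ v) / (⨅ i, hM.1.eigenvalues i) := by
  have : Nonempty (Fin n) := ⟨⟨0, hn⟩⟩
  set eig := hM.1.eigenvalues with heig
  set U : Matrix (Fin n) (Fin n) ℝ := (hM.1.eigenvectorUnitary : Matrix (Fin n) (Fin n) ℝ) with hU
  have hU1 : U * star U = 1 := mem_unitaryGroup_iff.mp hM.1.eigenvectorUnitary.2
  have hU2 : star U * U = 1 := mem_unitaryGroup_iff'.mp hM.1.eigenvectorUnitary.2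
  have heigpos : ∀ i, 0 < eig i := hM.eigenvalues_pos
  set c := ⨅ i, eig i with hc
  obtain ⟨i₀, hi₀⟩ := Finite.exists_min eig
  have hcpos : 0 < c := lt_of_lt_of_le (heigpos i₀) (le_ciInf hi₀)
  have hcle : ∀ i, c ≤ eig i := fun i => ciInf_le (Finite.bddBelow_range eig) i
  have hspec : M = U * diagonal eig * star U := by
    have := hM.1.spectral_theorem
    rwa [show (RCLike.ofReal ∘ eig : Fin n → ℝ) = eig from rfl] at this
  have hDD : diagonal eig * diagonal (fun i => (eig i)⁻¹) = 1 := by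
    rw [diagonal_mul_diagonal]
    convert diagonal_one with i
    exact mul_inv_cancel₀ (heigpos i).ne'
  have hinv : M⁻¹ = U * diagonal (fun i => (eig i)⁻¹) * star U := by
    apply inv_eq_right_inv
    rw [hspec]
    simp only [Matrix.mul_assoc]
    rw [← Matrix.mul_assoc (star U) U, hU2, Matrix.one_mul,
      ← Matrix.mul_assoc (diagonal eig), hDD, Matrix.one_mul, hU1]
  set w := (star U) *ᵥ v with hw
  have hUT : Uᵀ = star U := by
    rw [star_eq_conjTranspose, conjTranspose_eq_transpose_of_trivial]
  have hsUT : (star U)ᵀ = U := by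
    rw [star_eq_conjTranspose, conjTranspose_eq_transpose_of_trivial, transpose_transpose]
  have hvv : v ⬝ᵥ v = w ⬝ᵥ w := by
    rw [hw, dotHelper, hsUT, mulVec_mulVec, hU1, one_mulVec]
  have hlhs : (M⁻¹ *ᵥ v) ⬝ᵥ v = ∑ i, (eig i)⁻¹ * (w i * w i) := by
    rw [hinv, ← mulVec_mulVec, ← mulVec_mulVec, dotHelper, hUT, ← hw]
    simp [dotProduct, mulVec_diagonal, mul_assoc]
  rw [hlhs, hvv, div_eq_inv_mul, dotProduct, Finset.mul_sum]
  apply Finset.sum_le_sum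
  intro i _
  have h1 : (eig i)⁻¹ ≤ c⁻¹ := inv_anti₀ hcpos (hcle i)
  nlinarith [mul_self_nonneg (w i)]

/-- For `n ≤ d`, a rank-`n` matrix `A`, true signal `αstar`, noise `W`,
data `Y = A αstar + W`, and any first-stage estimate `α₁`, the hybrid interpolator
`α_hybrid = α₁ + Aᵀ (A Aᵀ)⁻¹ (Y - A α₁)` interpolates the data, the smallest eigenvalue of
`A Aᵀ` is positive, and the excess test MSE of the hybrid interpolator (for whitened
features) satisfies
`‖α_hybrid - αstar‖₂² ≤ 2 ‖α₁ - αstar‖₂² + (4‖W‖₂² + 4‖A(α₁ - αstar)‖₂²) / λ_min(A Aᵀ)`. -/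
theorem hybrid_interpolator_mse_bound (n d : ℕ) (hn : 0 < n) (hnd : n ≤ d)
    (A : Matrix (Fin n) (Fin d) ℝ) (hrank : A.rank = n)
    (hH : (A * Aᵀ).IsHermitian)
    (αstar α₁ : Fin d → ℝ) (W : Fin n → ℝ) (Y : Fin n → ℝ)
    (hY : Y = A.mulVec αstar + W)
    (αhybrid : Fin d → ℝ)
    (hhybrid : αhybrid = α₁ + Aᵀ.mulVec ((A * Aᵀ)⁻¹.mulVec (Y - A.mulVec α₁))) :
    A.mulVec αhybrid = Y ∧
    (0 < ⨅ i, hH.eigenvalues i) ∧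
    ∑ j, (αhybrid j - αstar j) ^ 2 ≤
      2 * ∑ j, (α₁ j - αstar j) ^ 2 +
        (4 * ∑ i, (W i) ^ 2 + 4 * ∑ i, (A.mulVec (α₁ - αstar) i) ^ 2) /
          (⨅ i, hH.eigenvalues i) := by
  have : Nonempty (Fin n) := ⟨⟨0, hn⟩⟩
  have hPD : (A * Aᵀ).PosDef := auxPosDef A hrank
  set M := A * Aᵀ with hM
  have hdet : IsUnit M.det := hPD.det_pos.ne'.isUnit
  have hMM : M * M⁻¹ = 1 := mul_nonsing_inv M hdet
  set eig := hH.eigenvalues with heig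
  have heigpos : ∀ i, 0 < eig i := hPD.eigenvalues_pos
  set c := ⨅ i, eig i with hc
  obtain ⟨i₀, hi₀⟩ := Finite.exists_min eig
  have hcpos : 0 < c := lt_of_lt_of_le (heigpos i₀) (le_ciInf hi₀)
  -- interpolation
  have hinterp : A *ᵥ αhybrid = Y := by
    rw [hhybrid, mulVec_add, mulVec_mulVec, mulVec_mulVec]
    rw [← hM, hMM, one_mulVec, add_sub_cancel]
  refine ⟨hinterp, hcpos, ?_⟩
  -- the error bound
  set e : Fin d → ℝ := α₁ - αstar with he
  set v : Fin n → ℝ := W - A *ᵥ e with hv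
  have hresid : Y - A *ᵥ α₁ = v := by
    rw [hY, hv, he, mulVec_sub]
    abel
  set u : Fin n → ℝ := M⁻¹ *ᵥ v with hu
  set Δ : Fin d → ℝ := Aᵀ *ᵥ u with hΔ
  have hΔeq : αhybrid = α₁ + Δ := by rw [hhybrid, hresid]
  have hMu : M *ᵥ u = v := by rw [hu, mulVec_mulVec, hMM, one_mulVec]
  have hΔnorm : ∑ j, (Δ j) ^ 2 = u ⬝ᵥ v := by
    have : Δ ⬝ᵥ Δ = u ⬝ᵥ v := by
      rw [hΔ, dotHelper, transpose_transpose, mulVec_mulVec, ← hM, hMu]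
    rw [← this]
    simp [dotProduct, sq]
  have hquad : u ⬝ᵥ v ≤ (v ⬝ᵥ v) / c := quadBound hn M hPD v
  have hvnorm : v ⬝ᵥ v ≤ 2 * ∑ i, (W i) ^ 2 + 2 * ∑ i, (A.mulVec e i) ^ 2 := by
    calc v ⬝ᵥ v = ∑ i, v i * v i := rfl
      _ ≤ ∑ i, (2 * W i ^ 2 + 2 * (A *ᵥ e) i ^ 2) := by
          apply Finset.sum_le_sum
          intro i _
          have hvi : v i = W i - (A *ᵥ e) i := by rw [hv]; simp
          rw [hvi]
          nlinarith [sq_nonneg (W i + (A *ᵥ e) i)]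
      _ = 2 * ∑ i, (W i) ^ 2 + 2 * ∑ i, (A *ᵥ e) i ^ 2 := by
          rw [Finset.sum_add_distrib, Finset.mul_sum, Finset.mul_sum]
  have hsum : ∑ j, (αhybrid j - αstar j) ^ 2 ≤ 2 * ∑ j, (e j) ^ 2 + 2 * ∑ j, (Δ j) ^ 2 := by
    calc ∑ j, (αhybrid j - αstar j) ^ 2 = ∑ j, (e j + Δ j) ^ 2 := by
          apply Finset.sum_congr rfl
          intro j _
          rw [hΔeq, he]
          simp [Pi.add_apply, Pi.sub_apply]
          ring
      _ ≤ ∑ j, (2 * e j ^ 2 + 2 * Δ j ^ 2) := by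
          apply Finset.sum_le_sum
          intro j _
          nlinarith [sq_nonneg (e j - Δ j)]
      _ = 2 * ∑ j, (e j) ^ 2 + 2 * ∑ j, (Δ j) ^ 2 := by
          rw [Finset.sum_add_distrib, Finset.mul_sum, Finset.mul_sum]
  have hEe : ∀ j, e j = α₁ j - αstar j := fun j => rfl
  have hfinal : 2 * ∑ j, (Δ j) ^ 2 ≤
      (4 * ∑ i, (W i) ^ 2 + 4 * ∑ i, (A.mulVec (α₁ - αstar) i) ^ 2) / c := by
    rw [hΔnorm]
    rw [div_eq_inv_mul]
    have h1 : u ⬝ᵥ v ≤ c⁻¹ * (v ⬝ᵥ v) := by rwa [← div_eq_inv_mul]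
    have h2 : c⁻¹ * (v ⬝ᵥ v) ≤ c⁻¹ * (2 * ∑ i, (W i) ^ 2 + 2 * ∑ i, (A *ᵥ e) i ^ 2) :=
      mul_le_mul_of_nonneg_left hvnorm (inv_nonneg.mpr hcpos.le)
    have h3 : 2 * (u ⬝ᵥ v) ≤ 2 * (c⁻¹ * (2 * ∑ i, (W i) ^ 2 + 2 * ∑ i, (A *ᵥ e) i ^ 2)) := by
      nlinarith
    calc 2 * (u ⬝ᵥ v) ≤ 2 * (c⁻¹ * (2 * ∑ i, (W i) ^ 2 + 2 * ∑ i, (A *ᵥ e) i ^ 2)) := h3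
      _ = c⁻¹ * (4 * ∑ i, (W i) ^ 2 + 4 * ∑ i, (A *ᵥ e) i ^ 2) := by ring
      _ = c⁻¹ * (4 * ∑ i, (W i) ^ 2 + 4 * ∑ i, (A.mulVec (α₁ - αstar) i) ^ 2) := by rw [← he]
  have : ∑ j, (e j) ^ 2 = ∑ j, (α₁ j - αstar j) ^ 2 := by
    apply Finset.sum_congr rfl; intro j _; rw [hEe]
  linarith [hsum, hfinal, this]
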